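/- Let T be an invertible generalized hyperbolic operator on a complex Banach space X. Then there exist ε > 0 and a constant C > 0, independent of p, with the following property: for every p ∈ ℕ there is an assignment 𝓛 = (L₁,…,L_p) ↦ h_𝓛, defined on all p-tuples of bounded Lipschitz maps L_j : X → X with Lip(L_j) < ε, such that each h_𝓛 : X → X is a homeomorphism with (T+L₁)∘⋯∘(T+L_p) = h_𝓛 ∘ T^p ∘ h_𝓛⁻¹ and sup_{x∈X} ‖h_𝓛(x) − x‖ < ∞, and such that for any two such p-tuples 𝓛 = (L₁,…,L_p) and 𝓛' = (L'₁,…,L'_p) one has sup_{x∈X} ‖h_𝓛(x) − h_{𝓛'}(x)‖ ≤ C · max_{1≤j≤p} ‖L_j − L'_j‖_∞. -/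

import Mathlib

noncomputable section

/-- Restriction of a continuous linear map to an invariant subspace. -/
def restrictOp {𝕜 X : Type*} [NontriviallyNormedField 𝕜] [NormedAddCommGroup X]
    [NormedSpace 𝕜 X] (T : X →L[𝕜] X) (M : Submodule 𝕜 X)
    (hM : ∀ x ∈ M, T x ∈ M) : M →L[𝕜] M :=
  (T.comp M.subtypeL).codRestrict M fun x => hM x x.2

/-- `T` is an (invertible) generalized hyperbolic operator: there are closed subspaces
`M`, `N` with `X = M ⊕ N` (topological direct sum), `T(M) ⊆ M` with `σ(T|_M) ⊆ 𝔻`, and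
`T⁻¹(N) ⊆ N` with `σ(T⁻¹|_N) ⊆ 𝔻`. -/
def IsGenHyperbolic {X : Type*} [NormedAddCommGroup X] [NormedSpace ℂ X]
    (T : X ≃L[ℂ] X) : Prop :=
  ∃ (M N : Submodule ℂ X), IsClosed (M : Set X) ∧ IsClosed (N : Set X) ∧
    IsCompl M N ∧
    ∃ (hM : ∀ x ∈ M, T x ∈ M) (hN : ∀ x ∈ N, T.symm x ∈ N),
      spectrum ℂ (restrictOp (T : X →L[ℂ] X) M hM) ⊆ Metric.ball (0 : ℂ) 1 ∧
      spectrum ℂ (restrictOp (T.symm : X →L[ℂ] X) N hN) ⊆ Metric.ball (0 : ℂ) 1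

/-- The sup-norm of the map `F` is finite, i.e. `F` is a bounded map. -/
def BoundedMap {X Y : Type*} [Norm Y] (F : X → Y) : Prop :=
  ∃ C, ∀ x, ‖F x‖ ≤ C

/-- `‖F‖_∞ < ε`. -/
def SupNormLt {X Y : Type*} [Norm Y] (F : X → Y) (ε : ℝ) : Prop :=
  ∃ c, c < ε ∧ ∀ x, ‖F x‖ ≤ c

/-- `Lip(F) < ε`: `F` is Lipschitz with some constant `< ε`. -/
def LipLt {X Y : Type*} [PseudoEMetricSpace X] [PseudoEMetricSpace Y]
    (F : X → Y) (ε : ℝ) : Prop :=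
  ∃ c : NNReal, (c : ℝ) < ε ∧ LipschitzWith c F

/-- The composition `S 0 ∘ S 1 ∘ ⋯ ∘ S (p-1)`. -/
def CompFamily {X : Type*} (p : ℕ) (S : Fin p → X → X) : X → X :=
  (List.ofFn S).foldr (· ∘ ·) id

/-- For a generalized hyperbolic operator `T` there are `ε > 0` and `C > 0`, independent of
`p`, and for each `p` an assignment `𝓛 ↦ h_𝓛` on the `p`-tuples of bounded Lipschitz maps
with `Lip(L_j) < ε`, such that `h_𝓛` is a homeomorphism at bounded distance from the identity
conjugating `(T+L₁)∘⋯∘(T+L_p)` and `T^p`, and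
`‖h_𝓛 - h_𝓛'‖_∞ ≤ C · max_j ‖L_j - L'_j‖_∞`. -/


lemma compFamily_succ {X : Type*} (n : ℕ) (S : Fin (n+1) → X → X) :
    CompFamily (n+1) S = S 0 ∘ CompFamily n (fun i => S i.succ) := by
  unfold CompFamily
  rw [List.ofFn_succ]
  rfl

lemma comp_conj {X : Type*} (f : X → X) :
    ∀ (n : ℕ) (A : Fin n → X → X) (ϕ : Fin (n+1) → X → X),
    (∀ (i : Fin n) (x : X), A i (ϕ i.succ x) = ϕ i.castSucc (f x)) →
    ∀ x, CompFamily n A (ϕ (Fin.last n) x) = ϕ 0 (f^[n] x) := by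
  intro n
  induction n with
  | zero =>
    intro A ϕ _ x
    show ϕ (Fin.last 0) x = ϕ 0 x
    rfl
  | succ n ih =>
    intro A ϕ hyp x
    rw [compFamily_succ]
    have h1 : ϕ (Fin.last (n+1)) = (fun i : Fin (n+1) => ϕ i.succ) (Fin.last n) := by
      show ϕ (Fin.last (n+1)) = ϕ (Fin.last n).succ
      rw [Fin.succ_last]
    show A 0 (CompFamily n (fun i => A i.succ) (ϕ (Fin.last (n+1)) x)) = _
    rw [h1, ih (fun i => A i.succ) (fun i => ϕ i.succ)
      (fun i x => by
        show A i.succ (ϕ i.succ.succ x) = ϕ i.castSucc.succ (f x)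
        rw [Fin.succ_castSucc]
        exact hyp i.succ x) x]
    rw [hyp 0 (f^[n] x)]
    have h2 : (0 : Fin (n+1)).castSucc = 0 := rfl
    rw [h2, ← Function.iterate_succ_apply' f n x]

open Filter Topology in

-- summability of powers from spectrum in the unit ball
lemma summable_norm_pow_of_spectrum_lt_one {Y : Type*} [NormedAddCommGroup Y]
    [NormedSpace ℂ Y] [CompleteSpace Y] (R : Y →L[ℂ] Y)
    (h : spectrum ℂ R ⊆ Metric.ball (0 : ℂ) 1) :
    Summable (fun n : ℕ => ‖R ^ n‖) := by
  rcases subsingleton_or_nontrivial Y with hY | hY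
  · have : ∀ n : ℕ, R ^ n = (0 : Y →L[ℂ] Y) := fun n => Subsingleton.elim _ _
    simp only [this, norm_zero]
    exact summable_zero
  · -- spectral radius < 1
    have hrad : spectralRadius ℂ R < 1 := by
      refine spectrum.spectralRadius_lt_of_forall_lt_of_nonempty (spectrum.nonempty R) ?_
      intro k hk
      have := h hk
      rw [Metric.mem_ball, dist_zero_right] at this
      exact_mod_cast this
    obtain ⟨c, hc1, hc2⟩ := ENNReal.lt_iff_exists_nnreal_btwn.mp hrad
    have hc1' : spectralRadius ℂ R < (c : ENNReal) := hc1
    have hgel := spectrum.pow_nnnorm_pow_one_div_tendsto_nhds_spectralRadius R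
    have hev : ∀ᶠ n : ℕ in atTop, (‖R ^ n‖₊ : ENNReal) ^ (1 / (n : ℝ)) < (c : ENNReal) :=
      hgel.eventually_lt_const hc1'
    obtain ⟨N0, hN0⟩ := hev.exists_forall_of_atTop
    have hcR : (c : ℝ) < 1 := by exact_mod_cast hc2
    have key : ∀ n : ℕ, 1 ≤ n → N0 ≤ n → ‖R ^ n‖ ≤ (c : ℝ) ^ n := by
      intro n hn1 hnN
      have h1 : (‖R ^ n‖₊ : ENNReal) ^ (1 / (n : ℝ)) < (c : ENNReal) := hN0 n hnN
      have h2 : ((‖R ^ n‖₊ : ENNReal) ^ (1 / (n : ℝ))) ^ (n : ℝ) ≤ (c : ENNReal) ^ (n : ℝ) :=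
        ENNReal.rpow_le_rpow h1.le (by positivity)
      rw [← ENNReal.rpow_mul, one_div,
        inv_mul_cancel₀ (Nat.cast_ne_zero.mpr (by omega : n ≠ 0)),
        ENNReal.rpow_one, ENNReal.rpow_natCast] at h2
      have h3 : (‖R ^ n‖₊ : ENNReal) ≤ (c : ENNReal) ^ n := h2
      have h4 : ‖R ^ n‖₊ ≤ c ^ n := by exact_mod_cast h3
      calc ‖R ^ n‖ = (‖R ^ n‖₊ : ℝ) := rfl
        _ ≤ ((c ^ n : NNReal) : ℝ) := by exact_mod_cast h4
        _ = (c : ℝ) ^ n := by push_cast; ring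
    -- compare with geometric series after a shift
    rw [← summable_nat_add_iff (N0 + 1)]
    refine Summable.of_nonneg_of_le (fun n => norm_nonneg _) (fun n => ?_)
      ((summable_geometric_of_lt_one c.coe_nonneg hcR).comp_injective
        (add_left_injective (N0 + 1)))
    exact key _ (by omega) (by omega)
/-- Data pack abstracting the hyperbolic splitting. -/
structure GreenPack (X : Type*) [NormedAddCommGroup X] [NormedSpace ℂ X] where
  Te : X ≃L[ℂ] X
  A : ℕ → X →L[ℂ] X
  B : ℕ → X →L[ℂ] X
  hTA : ∀ m, (Te : X →L[ℂ] X).comp (A m) = A (m + 1)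
  hTB : ∀ m, (Te : X →L[ℂ] X).comp (B (m + 1)) = B m
  hsplit : ∀ x, A 0 x + (Te : X →L[ℂ] X) (B 0 x) = x
  hsum : Summable fun m => ‖A m‖ + ‖B m‖

theorem exists_greenPack {X : Type*} [NormedAddCommGroup X] [NormedSpace ℂ X]
    [CompleteSpace X] (T : X ≃L[ℂ] X) (hT : IsGenHyperbolic T) :
    ∃ pk : GreenPack X, pk.Te = T := by
  classical
  obtain ⟨M, N, hMc, hNc, hcompl, hM, hN, hσM, hσN⟩ := hT
  haveI : CompleteSpace M := hMc.completeSpace_coe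
  haveI : CompleteSpace N := hNc.completeSpace_coe
  set Tclm : X →L[ℂ] X := (T : X →L[ℂ] X) with hTclm
  set Sclm : X →L[ℂ] X := (T.symm : X →L[ℂ] X) with hSclm
  set f : (M × N) →L[ℂ] X := M.subtypeL.coprod N.subtypeL with hf
  have hker : LinearMap.ker (f : (M × N) →ₗ[ℂ] X) = ⊥ := by
    rw [LinearMap.ker_eq_bot']
    rintro ⟨m, n⟩ hmn
    have hmn' : (m : X) + (n : X) = 0 := hmn
    have hm2 : (m : X) = -(n : X) := eq_neg_of_add_eq_zero_left hmn'
    have hmem : (m : X) ∈ N := hm2 ▸ N.neg_mem n.2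
    have hm0 : (m : X) = 0 := (Submodule.disjoint_def.mp hcompl.disjoint) _ m.2 hmem
    have hn0 : (n : X) = 0 := by rw [hm0] at hmn'; simpa using hmn'
    ext
    · exact hm0
    · exact hn0
  have hrange : LinearMap.range (f : (M × N) →ₗ[ℂ] X) = ⊤ := by
    rw [LinearMap.range_eq_top]
    intro x
    have hx : x ∈ M ⊔ N := by rw [hcompl.sup_eq_top]; trivial
    obtain ⟨y, hy, z, hz, hyz⟩ := Submodule.mem_sup.mp hx
    exact ⟨(⟨y, hy⟩, ⟨z, hz⟩), hyz⟩
  set e := ContinuousLinearEquiv.ofBijective f hker hrange with he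
  set pMs : X →L[ℂ] M := (ContinuousLinearMap.fst ℂ M N).comp (e.symm : X →L[ℂ] (M × N)) with hpM
  set pNs : X →L[ℂ] N := (ContinuousLinearMap.snd ℂ M N).comp (e.symm : X →L[ℂ] (M × N)) with hpN
  have hMN : ∀ x : X, ((pMs x : X)) + ((pNs x : X)) = x := by
    intro x
    have h1 : e (e.symm x) = x := e.apply_symm_apply x
    have h2 : e (e.symm x) = ((e.symm x).1 : X) + ((e.symm x).2 : X) := rfl
    rw [h2] at h1
    exact h1
  set RM := restrictOp Tclm M hM with hRM
  set RN := restrictOp Sclm N hN with hRN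
  have hcoeM : ∀ (m : ℕ) (y : M), (Tclm ^ m) (y : X) = ((RM ^ m) y : X) := by
    intro m
    induction m with
    | zero => intro y; simp
    | succ m ih =>
      intro y
      rw [pow_succ, pow_succ, ContinuousLinearMap.mul_apply, ContinuousLinearMap.mul_apply]
      have : Tclm (y : X) = ((RM y : M) : X) := rfl
      rw [this, ih]
  have hcoeN : ∀ (m : ℕ) (y : N), (Sclm ^ m) (y : X) = ((RN ^ m) y : X) := by
    intro m
    induction m with
    | zero => intro y; simp
    | succ m ih =>
      intro y
      rw [pow_succ, pow_succ, ContinuousLinearMap.mul_apply, ContinuousLinearMap.mul_apply]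
      have : Sclm (y : X) = ((RN y : N) : X) := rfl
      rw [this, ih]
  refine ⟨⟨T,
    fun m => (Tclm ^ m).comp (M.subtypeL.comp pMs),
    fun m => (Sclm ^ (m+1)).comp (N.subtypeL.comp pNs), ?_, ?_, ?_, ?_⟩, rfl⟩
  · intro m
    ext x
    simp only [ContinuousLinearMap.comp_apply]
    rw [show ((T : X →L[ℂ] X) : X → X) = Tclm from rfl]
    rw [pow_succ']
    rfl
  · intro m
    ext x
    simp only [ContinuousLinearMap.comp_apply]
    have : Tclm ((Sclm ^ (m + 1 + 1)) ((N.subtypeL (pNs x)))) =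
        (Sclm ^ (m+1)) ((N.subtypeL (pNs x))) := by
      rw [pow_succ']
      simp only [ContinuousLinearMap.mul_apply]
      show T (T.symm _) = _
      simp
    exact this
  · intro x
    simp only [ContinuousLinearMap.comp_apply, pow_zero, pow_one,
      ContinuousLinearMap.one_apply]
    rw [zero_add, pow_one]
    have h2 : (T : X →L[ℂ] X) (Sclm (N.subtypeL (pNs x))) = (pNs x : X) :=
      T.apply_symm_apply _
    rw [h2]
    exact hMN x
  · have hAle : ∀ m : ℕ, ‖(Tclm ^ m).comp (M.subtypeL.comp pMs)‖ ≤ ‖RM ^ m‖ * ‖pMs‖ := by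
      intro m
      refine ContinuousLinearMap.opNorm_le_bound _ (by positivity) (fun x => ?_)
      have h1 : (Tclm ^ m).comp (M.subtypeL.comp pMs) x = ((RM ^ m) (pMs x) : X) := by
        simp only [ContinuousLinearMap.comp_apply]
        exact hcoeM m (pMs x)
      rw [h1]
      calc ‖((RM ^ m) (pMs x) : X)‖ = ‖(RM ^ m) (pMs x)‖ := rfl
        _ ≤ ‖RM ^ m‖ * ‖pMs x‖ := ContinuousLinearMap.le_opNorm _ _
        _ ≤ ‖RM ^ m‖ * (‖pMs‖ * ‖x‖) := by
            exact mul_le_mul_of_nonneg_left (ContinuousLinearMap.le_opNorm _ _) (ContinuousLinearMap.opNorm_nonneg _)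
        _ = ‖RM ^ m‖ * ‖pMs‖ * ‖x‖ := by ring
    have hBle : ∀ m : ℕ, ‖(Sclm ^ (m+1)).comp (N.subtypeL.comp pNs)‖ ≤ ‖RN ^ (m+1)‖ * ‖pNs‖ := by
      intro m
      refine ContinuousLinearMap.opNorm_le_bound _ (by positivity) (fun x => ?_)
      have h1 : (Sclm ^ (m+1)).comp (N.subtypeL.comp pNs) x = ((RN ^ (m+1)) (pNs x) : X) := by
        simp only [ContinuousLinearMap.comp_apply]
        exact hcoeN (m+1) (pNs x)
      rw [h1]
      calc ‖((RN ^ (m+1)) (pNs x) : X)‖ = ‖(RN ^ (m+1)) (pNs x)‖ := rfl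
        _ ≤ ‖RN ^ (m+1)‖ * ‖pNs x‖ := ContinuousLinearMap.le_opNorm _ _
        _ ≤ ‖RN ^ (m+1)‖ * (‖pNs‖ * ‖x‖) := by
            exact mul_le_mul_of_nonneg_left (ContinuousLinearMap.le_opNorm _ _) (ContinuousLinearMap.opNorm_nonneg _)
        _ = ‖RN ^ (m+1)‖ * ‖pNs‖ * ‖x‖ := by ring
    have hsumM : Summable fun m : ℕ => ‖RM ^ m‖ * ‖pMs‖ :=
      (summable_norm_pow_of_spectrum_lt_one RM hσM).mul_right _
    have hsumN : Summable fun m : ℕ => ‖RN ^ (m+1)‖ * ‖pNs‖ :=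
      (((summable_nat_add_iff 1).2 (summable_norm_pow_of_spectrum_lt_one RN hσN))).mul_right _
    refine Summable.add ?_ ?_
    · exact Summable.of_nonneg_of_le (fun m => norm_nonneg _) hAle hsumM
    · exact Summable.of_nonneg_of_le (fun m => norm_nonneg _) hBle hsumN

open BoundedContinuousFunction
open Fin.NatCast
open Fin.CommRing

def Homeomorph.toContinuousMap {X Y : Type*} [TopologicalSpace X] [TopologicalSpace Y]
    (e : X ≃ₜ Y) : C(X, Y) := ⟨e, e.continuous⟩

@[simp] lemma Homeomorph.toContinuousMap_apply {X Y : Type*} [TopologicalSpace X]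
    [TopologicalSpace Y] (e : X ≃ₜ Y) (x : X) : e.toContinuousMap x = e x := rfl

namespace GH

variable {X : Type*} [NormedAddCommGroup X] [NormedSpace ℂ X] [CompleteSpace X]

/-- Precomposition with a continuous map, as a CLM on bounded continuous functions. -/
def preB (c : C(X, X)) : (X →ᵇ X) →L[ℂ] (X →ᵇ X) :=
  LinearMap.mkContinuous
    { toFun := fun f => f.compContinuous c
      map_add' := fun f g => by ext x; show (f + g) (c x) = f (c x) + g (c x); simp
      map_smul' := fun r f => by ext x; show (r • f) (c x) = r • (f (c x)); simp }
    1 (fun f => by simpa using f.norm_compContinuous_le c)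

@[simp] lemma preB_apply (c : C(X, X)) (f : X →ᵇ X) (x : X) :
    preB c f x = f (c x) := rfl

/-- Postcomposition with a continuous linear map. -/
def postB (A : X →L[ℂ] X) : (X →ᵇ X) →L[ℂ] (X →ᵇ X) :=
  A.compLeftContinuousBounded X

@[simp] lemma postB_apply (A : X →L[ℂ] X) (f : X →ᵇ X) (x : X) :
    postB A f x = A (f x) := rfl

lemma norm_postB_le (A : X →L[ℂ] X) (f : X →ᵇ X) : ‖postB A f‖ ≤ ‖A‖ * ‖f‖ := by
  refine norm_le (by positivity) |>.mpr (fun x => ?_)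
  calc ‖A (f x)‖ ≤ ‖A‖ * ‖f x‖ := A.le_opNorm _
    _ ≤ ‖A‖ * ‖f‖ := mul_le_mul_of_nonneg_left (f.norm_coe_le_norm x) (norm_nonneg A)

variable (pk : GreenPack X) {p : ℕ}

/-- chain of inverses `G_{j+m-1}⁻¹ ∘ ⋯ ∘ G_j⁻¹`. -/
def Cc (Gh : Fin (p+1) → X ≃ₜ X) (j : Fin (p+1)) : ℕ → C(X, X)
  | 0 => ContinuousMap.id X
  | m+1 => ((Gh (j + (m : Fin (p+1)))).symm.toContinuousMap).comp (Cc Gh j m)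

/-- chain `G_{j-m} ∘ ⋯ ∘ G_{j-1}` (rightmost applied first). -/
def Dc (Gh : Fin (p+1) → X ≃ₜ X) : ℕ → Fin (p+1) → C(X, X)
  | 0, _ => ContinuousMap.id X
  | m+1, j => (Dc Gh m (j-1)).comp (Gh (j-1)).toContinuousMap

variable (Gh : Fin (p+1) → X ≃ₜ X)

def tA (w : Fin (p+1) → (X →ᵇ X)) (j : Fin (p+1)) (m : ℕ) : X →ᵇ X :=
  postB (pk.A m) ((w (j + (m : Fin (p+1)))).compContinuous (Cc Gh j m))

def tB (w : Fin (p+1) → (X →ᵇ X)) (j : Fin (p+1)) (m : ℕ) : X →ᵇ X :=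
  postB (pk.B m) ((w (j - ((m : Fin (p+1)) + 1))).compContinuous (Dc Gh (m+1) j))

lemma norm_tA_le (w) (j) (m) : ‖tA pk Gh w j m‖ ≤ ‖pk.A m‖ * ‖w‖ := by
  refine (norm_postB_le _ _).trans ?_
  refine mul_le_mul_of_nonneg_left ?_ (norm_nonneg _)
  exact ((w _).norm_compContinuous_le _).trans (norm_le_pi_norm w _)

lemma norm_tB_le (w) (j) (m) : ‖tB pk Gh w j m‖ ≤ ‖pk.B m‖ * ‖w‖ := by
  refine (norm_postB_le _ _).trans ?_
  refine mul_le_mul_of_nonneg_left ?_ (norm_nonneg _)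
  exact ((w _).norm_compContinuous_le _).trans (norm_le_pi_norm w _)

lemma sumNormA : Summable fun m => ‖pk.A m‖ :=
  Summable.of_nonneg_of_le (fun _ => norm_nonneg _)
    (fun m => le_add_of_nonneg_right (norm_nonneg _)) pk.hsum

lemma sumNormB : Summable fun m => ‖pk.B m‖ :=
  Summable.of_nonneg_of_le (fun _ => norm_nonneg _)
    (fun m => le_add_of_nonneg_left (norm_nonneg _)) pk.hsum

lemma sum_tA (w) (j) : Summable (tA pk Gh w j) :=
  Summable.of_norm (.of_nonneg_of_le (fun _ => norm_nonneg _)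
    (norm_tA_le pk Gh w j) ((sumNormA pk).mul_right _))

lemma sum_tB (w) (j) : Summable (tB pk Gh w j) :=
  Summable.of_norm (.of_nonneg_of_le (fun _ => norm_nonneg _)
    (norm_tB_le pk Gh w j) ((sumNormB pk).mul_right _))

/-- The Green operator. -/
def grn (w : Fin (p+1) → (X →ᵇ X)) (j : Fin (p+1)) : X →ᵇ X :=
  (∑' m, tA pk Gh w j m) - (∑' m, tB pk Gh w j m)

/-- norm bound: `‖grn w j‖ ≤ Sig * ‖w‖` with `Sig = ∑ (‖A m‖ + ‖B m‖)`. -/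
lemma norm_grn_le (w) (j) : ‖grn pk Gh w j‖ ≤ (∑' m, (‖pk.A m‖ + ‖pk.B m‖)) * ‖w‖ := by
  have hA : ‖∑' m, tA pk Gh w j m‖ ≤ (∑' m, ‖pk.A m‖) * ‖w‖ := by
    refine (norm_tsum_le_tsum_norm ?_).trans ?_
    · exact .of_nonneg_of_le (fun _ => norm_nonneg _) (norm_tA_le pk Gh w j)
        ((sumNormA pk).mul_right _)
    · rw [← tsum_mul_right]
      exact Summable.tsum_le_tsum (norm_tA_le pk Gh w j)
        (.of_nonneg_of_le (fun _ => norm_nonneg _) (norm_tA_le pk Gh w j)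
          ((sumNormA pk).mul_right _)) ((sumNormA pk).mul_right _)
  have hB : ‖∑' m, tB pk Gh w j m‖ ≤ (∑' m, ‖pk.B m‖) * ‖w‖ := by
    refine (norm_tsum_le_tsum_norm ?_).trans ?_
    · exact .of_nonneg_of_le (fun _ => norm_nonneg _) (norm_tB_le pk Gh w j)
        ((sumNormB pk).mul_right _)
    · rw [← tsum_mul_right]
      exact Summable.tsum_le_tsum (norm_tB_le pk Gh w j)
        (.of_nonneg_of_le (fun _ => norm_nonneg _) (norm_tB_le pk Gh w j)
          ((sumNormB pk).mul_right _)) ((sumNormB pk).mul_right _)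
  calc ‖grn pk Gh w j‖ ≤ ‖∑' m, tA pk Gh w j m‖ + ‖∑' m, tB pk Gh w j m‖ := norm_sub_le _ _
    _ ≤ (∑' m, ‖pk.A m‖) * ‖w‖ + (∑' m, ‖pk.B m‖) * ‖w‖ := add_le_add hA hB
    _ = (∑' m, (‖pk.A m‖ + ‖pk.B m‖)) * ‖w‖ := by
        rw [Summable.tsum_add (sumNormA pk) (sumNormB pk)]; ring

lemma tA_sub (w w' : Fin (p+1) → (X →ᵇ X)) (j) (m) :
    tA pk Gh (w - w') j m = tA pk Gh w j m - tA pk Gh w' j m := by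
  ext x; simp [tA]

lemma tB_sub (w w' : Fin (p+1) → (X →ᵇ X)) (j) (m) :
    tB pk Gh (w - w') j m = tB pk Gh w j m - tB pk Gh w' j m := by
  ext x; simp [tB]

lemma grn_sub (w w' : Fin (p+1) → (X →ᵇ X)) (j) :
    grn pk Gh (w - w') j = grn pk Gh w j - grn pk Gh w' j := by
  unfold grn
  rw [funext (fun m => tA_sub pk Gh w w' j m) , funext (fun m => tB_sub pk Gh w w' j m),
    Summable.tsum_sub (sum_tA pk Gh w j) (sum_tA pk Gh w' j),
    Summable.tsum_sub (sum_tB pk Gh w j) (sum_tB pk Gh w' j)]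
  abel

lemma grn_neg (w : Fin (p+1) → (X →ᵇ X)) (j) :
    grn pk Gh (-w) j = - grn pk Gh w j := by
  have h0 : grn pk Gh 0 j = 0 := by
    unfold grn
    have hA : ∀ m, tA pk Gh (0 : Fin (p+1) → X →ᵇ X) j m = 0 := by
      intro m; ext x; simp [tA]
    have hB : ∀ m, tB pk Gh (0 : Fin (p+1) → X →ᵇ X) j m = 0 := by
      intro m; ext x; simp [tB]
    rw [funext hA, funext hB]
    simp
  have := grn_sub pk Gh 0 w j
  rw [h0] at this
  simpa using this

lemma cast_succ_fin (p m : ℕ) : ((m + 1 : ℕ) : Fin (p+1)) = (m : Fin (p+1)) + 1 := by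
  push_cast; ring

lemma Cc_shift (j : Fin (p+1)) (m : ℕ) :
    (Cc Gh (j+1) m).comp ((Gh j).symm.toContinuousMap) = Cc Gh j (m+1) := by
  induction m with
  | zero =>
    ext x
    simp [Cc]
  | succ m ih =>
    have h1 : (j + 1) + (m : Fin (p+1)) = j + ((m+1 : ℕ) : Fin (p+1)) := by
      push_cast; ring
    show (((Gh ((j+1) + (m : Fin (p+1)))).symm.toContinuousMap).comp
        (Cc Gh (j+1) m)).comp ((Gh j).symm.toContinuousMap) = _
    rw [ContinuousMap.comp_assoc, ih, h1]
    rfl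

lemma Dc_shift (j : Fin (p+1)) (m : ℕ) :
    Dc Gh (m+1) (j+1) = (Dc Gh m j).comp (Gh j).toContinuousMap := by
  show (Dc Gh m ((j+1)-1)).comp (Gh ((j+1)-1)).toContinuousMap = _
  rw [add_sub_cancel_right]

/-- The fundamental cohomological identity for the Green operator. -/
lemma grn_identity (w : Fin (p+1) → (X →ᵇ X)) (j : Fin (p+1)) :
    grn pk Gh w j = w j + ((postB ((pk.Te : X →L[ℂ] X))).comp
      (preB ((Gh j).symm.toContinuousMap))) (grn pk Gh w (j+1)) := by
  set c := (Gh j).symm.toContinuousMap with hc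
  set PQ : (X →ᵇ X) →L[ℂ] (X →ᵇ X) :=
    (postB ((pk.Te : X →L[ℂ] X))).comp (preB c) with hPQ
  have hA : ∀ m, PQ (tA pk Gh w (j+1) m) = tA pk Gh w j (m+1) := by
    intro m
    ext x
    show (pk.Te : X →L[ℂ] X) (pk.A m (w ((j+1) + (m : Fin (p+1)))
      ((Cc Gh (j+1) m) (c x)))) = pk.A (m+1) (w (j + ((m+1 : ℕ) : Fin (p+1)))
      ((Cc Gh j (m+1)) x))
    have h1 : (j + 1) + (m : Fin (p+1)) = j + ((m+1 : ℕ) : Fin (p+1)) := by push_cast; ring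
    have h2 : (Cc Gh j (m+1)) x = (Cc Gh (j+1) m) (c x) := by
      rw [← Cc_shift Gh j m]; rfl
    rw [h1, ← h2]
    exact congrFun (congrArg (fun (f : X →L[ℂ] X) => (f : X → X))
      (pk.hTA m)) (w (j + ((m+1 : ℕ) : Fin (p+1))) ((Cc Gh j (m+1)) x))
  have hB0 : tA pk Gh w j 0 + PQ (tB pk Gh w (j+1) 0) = w j := by
    ext x
    show pk.A 0 (w (j + ((0:ℕ) : Fin (p+1))) ((Cc Gh j 0) x))
        + (pk.Te : X →L[ℂ] X) (pk.B 0 (w ((j+1) - (((0:ℕ) : Fin (p+1))+1))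
          ((Dc Gh 1 (j+1)) (c x)))) = w j x
    have h1 : j + ((0:ℕ) : Fin (p+1)) = j := by push_cast; ring
    have h2 : (j+1) - (((0:ℕ) : Fin (p+1))+1) = j := by push_cast; ring
    have h3 : (Dc Gh 1 (j+1)) (c x) = x := by
      rw [Dc_shift]
      show (Dc Gh 0 j) ((Gh j) ((Gh j).symm x)) = x
      rw [Homeomorph.apply_symm_apply]
      rfl
    rw [h1, h2, h3]
    exact pk.hsplit (w j x)
  have hBs : ∀ m, PQ (tB pk Gh w (j+1) (m+1)) = tB pk Gh w j m := by
    intro m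
    ext x
    show (pk.Te : X →L[ℂ] X) (pk.B (m+1) (w ((j+1) - (((m+1:ℕ) : Fin (p+1))+1))
      ((Dc Gh (m+2) (j+1)) (c x)))) = pk.B m (w (j - ((m : Fin (p+1))+1))
      ((Dc Gh (m+1) j) x))
    have h1 : (j+1) - (((m+1:ℕ) : Fin (p+1))+1) = j - ((m : Fin (p+1))+1) := by
      push_cast; ring
    have h2 : (Dc Gh (m+2) (j+1)) (c x) = (Dc Gh (m+1) j) x := by
      rw [Dc_shift]
      show (Dc Gh (m+1) j) ((Gh j) ((Gh j).symm x)) = _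
      rw [Homeomorph.apply_symm_apply]
    rw [h1, h2]
    exact congrFun (congrArg (fun (f : X →L[ℂ] X) => (f : X → X))
      (pk.hTB m)) (w (j - ((m : Fin (p+1))+1)) ((Dc Gh (m+1) j) x))
  -- assemble
  have hSA : PQ (∑' m, tA pk Gh w (j+1) m) = (∑' m, tA pk Gh w j m) - tA pk Gh w j 0 := by
    rw [PQ.map_tsum (sum_tA pk Gh w (j+1))]
    rw [tsum_congr hA]
    have := Summable.tsum_eq_zero_add (sum_tA pk Gh w j)
    rw [this]
    abel
  have hsumPQB : Summable fun m => PQ (tB pk Gh w (j+1) m) :=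
    (sum_tB pk Gh w (j+1)).map PQ.toLinearMap.toAddMonoidHom PQ.continuous
  have hSB : PQ (∑' m, tB pk Gh w (j+1) m)
      = PQ (tB pk Gh w (j+1) 0) + (∑' m, tB pk Gh w j m) := by
    rw [PQ.map_tsum (sum_tB pk Gh w (j+1))]
    rw [Summable.tsum_eq_zero_add hsumPQB]
    congr 1
    exact tsum_congr hBs
  show grn pk Gh w j = w j + PQ (grn pk Gh w (j+1))
  unfold grn
  rw [map_sub, hSA, hSB, ← hB0]
  abel

variable (Gh' : Fin (p+1) → X ≃ₜ X) (Φ : Fin (p+1) → C(X, X))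

lemma hR1_of_hR2 (hR2 : ∀ j x, Gh j (Φ (j+1) x) = Φ j (Gh' j x)) :
    ∀ (j : Fin (p+1)) (x : X), (Gh j).symm (Φ j x) = Φ (j+1) ((Gh' j).symm x) := by
  intro j x
  have := hR2 j ((Gh' j).symm x)
  rw [Homeomorph.apply_symm_apply] at this
  rw [← this, Homeomorph.symm_apply_apply]

lemma chainC (hR2 : ∀ j x, Gh j (Φ (j+1) x) = Φ j (Gh' j x)) :
    ∀ (m : ℕ) (j : Fin (p+1)) (x : X),
      Cc Gh j m (Φ j x) = Φ (j + (m : Fin (p+1))) (Cc Gh' j m x) := by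
  intro m
  induction m with
  | zero =>
    intro j x
    have h1 : j + ((0:ℕ) : Fin (p+1)) = j := by push_cast; ring
    rw [h1]
    rfl
  | succ m ih =>
    intro j x
    show (Gh (j + (m : Fin (p+1)))).symm ((Cc Gh j m) (Φ j x)) = _
    rw [ih j x, hR1_of_hR2 Gh Gh' Φ hR2 (j + (m : Fin (p+1)))]
    have h1 : j + (m : Fin (p+1)) + 1 = j + (((m+1:ℕ)) : Fin (p+1)) := by push_cast; ring
    rw [h1]
    rfl

lemma chainD (hR2 : ∀ j x, Gh j (Φ (j+1) x) = Φ j (Gh' j x)) :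
    ∀ (m : ℕ) (j : Fin (p+1)) (x : X),
      Dc Gh (m+1) j (Φ j x) = Φ (j - ((m : Fin (p+1))+1)) (Dc Gh' (m+1) j x) := by
  intro m
  induction m with
  | zero =>
    intro j x
    show (Dc Gh 0 (j-1)) ((Gh (j-1)) (Φ j x)) = _
    have h0 : j = (j - 1) + 1 := by ring
    have h2 := hR2 (j-1) x
    rw [← h0] at h2
    have h1 : j - (((0:ℕ) : Fin (p+1))+1) = j - 1 := by push_cast; ring
    rw [h1]
    show (Gh (j-1)) (Φ j x) = Φ (j-1) ((Dc Gh' 1 j) x)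
    rw [h2]
    rfl
  | succ m ih =>
    intro j x
    show (Dc Gh (m+1) (j-1)) ((Gh (j-1)) (Φ j x)) = _
    have h0 : j = (j - 1) + 1 := by ring
    have h2 := hR2 (j-1) x
    rw [← h0] at h2
    rw [h2, ih (j-1) ((Gh' (j-1)) x)]
    have h1 : (j - 1) - ((m : Fin (p+1))+1) = j - (((m+1:ℕ) : Fin (p+1))+1) := by
      push_cast; ring
    rw [h1]
    rfl

lemma grn_comp (hR2 : ∀ j x, Gh j (Φ (j+1) x) = Φ j (Gh' j x))
    (w : Fin (p+1) → (X →ᵇ X)) (j : Fin (p+1)) :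
    preB (Φ j) (grn pk Gh w j) = grn pk Gh' (fun i => preB (Φ i) (w i)) j := by
  unfold grn
  rw [map_sub, (preB (Φ j)).map_tsum (sum_tA pk Gh w j),
    (preB (Φ j)).map_tsum (sum_tB pk Gh w j)]
  congr 1
  · refine tsum_congr (fun m => ?_)
    ext x
    show pk.A m (w (j + (m : Fin (p+1))) ((Cc Gh j m) (Φ j x))) = _
    rw [chainC Gh Gh' Φ hR2 m j x]
    rfl
  · refine tsum_congr (fun m => ?_)
    ext x
    show pk.B m (w (j - ((m : Fin (p+1))+1)) ((Dc Gh (m+1) j) (Φ j x))) = _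
    rw [chainD Gh Gh' Φ hR2 m j x]
    rfl

end GH
open scoped NNReal

namespace GH

variable {X : Type*} [NormedAddCommGroup X] [NormedSpace ℂ X] [CompleteSpace X]

-- ===== constants =====

def Sig (pk : GreenPack X) : ℝ := ∑' m, (‖pk.A m‖ + ‖pk.B m‖)

lemma Sig_nonneg (pk : GreenPack X) : 0 ≤ Sig pk :=
  tsum_nonneg (fun m => by positivity)

lemma norm_grn_le' (pk : GreenPack X) {p : ℕ} (Gh : Fin (p+1) → X ≃ₜ X) (w) (j) :
    ‖grn pk Gh w j‖ ≤ Sig pk * ‖w‖ := norm_grn_le pk Gh w j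

def epsdef (pk : GreenPack X) : ℝ :=
  min ((2*(Sig pk + 1))⁻¹) ((2*(‖(pk.Te.symm : X →L[ℂ] X)‖ + 1))⁻¹)

lemma epsdef_pos (pk : GreenPack X) : 0 < epsdef pk := by
  have := Sig_nonneg pk
  apply lt_min <;> positivity

lemma epsdef_le1 (pk : GreenPack X) : epsdef pk ≤ (2*(Sig pk + 1))⁻¹ := min_le_left _ _

lemma epsdef_le2 (pk : GreenPack X) :
    epsdef pk ≤ (2*(‖(pk.Te.symm : X →L[ℂ] X)‖ + 1))⁻¹ := min_le_right _ _

def Adm (pk : GreenPack X) {p : ℕ} (L : Fin (p+1) → X → X) : Prop :=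
  (∀ j, BoundedMap (L j)) ∧ (∀ j, LipLt (L j) (epsdef pk))

section Build

variable (pk : GreenPack X) {p : ℕ} (L : Fin (p+1) → X → X) (h : Adm pk L)

def lipc (j : Fin (p+1)) : ℝ≥0 := (h.2 j).choose

lemma lipc_lt (j) : ((lipc pk L h j : ℝ)) < epsdef pk := (h.2 j).choose_spec.1

lemma lipc_lip (j) : LipschitzWith (lipc pk L h j) (L j) := (h.2 j).choose_spec.2

include pk h in
lemma Lcont (j) : Continuous (L j) := (lipc_lip pk L h j).continuous

def bndc (j : Fin (p+1)) : ℝ := (h.1 j).choose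

lemma bndc_le (j) (x : X) : ‖L j x‖ ≤ bndc pk L h j := (h.1 j).choose_spec x

lemma Ldiff_le (j) (x y : X) : ‖L j x - L j y‖ ≤ (lipc pk L h j : ℝ) * ‖x - y‖ := by
  have := (lipc_lip pk L h j).dist_le_mul x y
  rwa [dist_eq_norm, dist_eq_norm] at this

lemma approxG (j) : ApproximatesLinearOn (fun y => pk.Te y + L j y)
    ((pk.Te : X ≃L[ℂ] X) : X →L[ℂ] X) Set.univ (lipc pk L h j) := by
  intro x _ y _
  have heq : (fun y => pk.Te y + L j y) x - (fun y => pk.Te y + L j y) y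
      - ((pk.Te : X ≃L[ℂ] X) : X →L[ℂ] X) (x - y) = L j x - L j y := by
    simp only [map_sub]
    have : ((pk.Te : X ≃L[ℂ] X) : X →L[ℂ] X) x = pk.Te x := rfl
    rw [this]
    have : ((pk.Te : X ≃L[ℂ] X) : X →L[ℂ] X) y = pk.Te y := rfl
    rw [this]
    abel
  rw [heq]
  exact Ldiff_le pk L h j x y

lemma hcond (j) : Subsingleton X ∨
    (lipc pk L h j) < (‖((pk.Te.symm : X ≃L[ℂ] X) : X →L[ℂ] X)‖₊)⁻¹ := by
  rcases subsingleton_or_nontrivial X with hs | hn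
  · exact Or.inl hs
  · right
    set a : ℝ := ‖((pk.Te.symm : X ≃L[ℂ] X) : X →L[ℂ] X)‖ with ha
    have h0 : (0:ℝ) < a := by
      obtain ⟨x, hx⟩ := exists_ne (0 : X)
      have hne : ((pk.Te.symm : X ≃L[ℂ] X) : X →L[ℂ] X) ≠ 0 := by
        intro hc
        apply hx
        have : x = ((pk.Te.symm : X ≃L[ℂ] X) : X →L[ℂ] X) (pk.Te x) :=
          (pk.Te.symm_apply_apply x).symm
        rw [this, hc]
        rfl
      simpa [ha] using norm_pos_iff.mpr hne
    have h1 : (lipc pk L h j : ℝ) < a⁻¹ := by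
      have h2 : (lipc pk L h j : ℝ) < (2*(a + 1))⁻¹ :=
        lt_of_lt_of_le (lipc_lt pk L h j) (epsdef_le2 pk)
      refine h2.trans_le ?_
      rw [inv_le_inv₀ (by positivity) h0]
      linarith
    rw [← NNReal.coe_lt_coe]
    push_cast
    rw [ha] at h1
    simpa using h1

def Ghom (j : Fin (p+1)) : X ≃ₜ X :=
  ApproximatesLinearOn.toHomeomorph (f := fun y => pk.Te y + L j y) (f' := pk.Te)
    (approxG pk L h j) (hcond pk L h j)

lemma Ghom_apply (j) (x : X) : Ghom pk L h j x = pk.Te x + L j x := rfl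

def Tfamd : Fin (p+1) → X ≃ₜ X := fun _ => (pk.Te : X ≃L[ℂ] X).toHomeomorph

lemma Tfamd_apply (j : Fin (p+1)) (x : X) : Tfamd pk (p := p) j x = pk.Te x := rfl

lemma Tfamd_symm_apply (j : Fin (p+1)) (x : X) :
    (Tfamd pk (p := p) j).symm x = pk.Te.symm x := rfl

def wkd : Fin (p+1) → (X →ᵇ X) := fun j =>
  BoundedContinuousFunction.ofNormedAddCommGroup
    (fun x => -(L j ((Ghom pk L h j).symm x)))
    (((Lcont pk L h j).comp (Ghom pk L h j).symm.continuous).neg)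
    (bndc pk L h j)
    (fun x => by rw [norm_neg]; exact bndc_le pk L h j _)

lemma wkd_apply (j) (x : X) : wkd pk L h j x = -(L j ((Ghom pk L h j).symm x)) := rfl

def kk : Fin (p+1) → (X →ᵇ X) := grn pk (Ghom pk L h) (wkd pk L h)

def PsiL (g : Fin (p+1) → (X →ᵇ X)) : Fin (p+1) → (X →ᵇ X) := fun j =>
  BoundedContinuousFunction.ofNormedAddCommGroup
    (fun x => L j (pk.Te.symm x + g (j+1) (pk.Te.symm x)))
    ((Lcont pk L h j).comp ((pk.Te.symm.continuous).add
      ((g (j+1)).continuous.comp pk.Te.symm.continuous)))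
    (bndc pk L h j)
    (fun x => bndc_le pk L h j _)

lemma PsiL_apply (g) (j) (x : X) :
    PsiL pk L h g j x = L j (pk.Te.symm x + g (j+1) (pk.Te.symm x)) := rfl

def PhiL (g : Fin (p+1) → (X →ᵇ X)) : Fin (p+1) → (X →ᵇ X) :=
  grn pk (Tfamd pk (p := p)) (PsiL pk L h g)

lemma PsiL_diff_le (g g') (j) :
    ‖PsiL pk L h g j - PsiL pk L h g' j‖ ≤ (epsdef pk) * ‖g - g'‖ := by
  have hnn : (0:ℝ) ≤ epsdef pk * ‖g - g'‖ :=
    mul_nonneg (epsdef_pos pk).le (norm_nonneg _)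
  refine (BoundedContinuousFunction.norm_le hnn).mpr (fun x => ?_)
  rw [BoundedContinuousFunction.sub_apply, PsiL_apply, PsiL_apply]
  set y := pk.Te.symm x
  calc ‖L j (y + g (j+1) y) - L j (y + g' (j+1) y)‖
      ≤ (lipc pk L h j : ℝ) * ‖(y + g (j+1) y) - (y + g' (j+1) y)‖ :=
        Ldiff_le pk L h j _ _
    _ = (lipc pk L h j : ℝ) * ‖g (j+1) y - g' (j+1) y‖ := by rw [add_sub_add_left_eq_sub]
    _ ≤ (lipc pk L h j : ℝ) * ‖g - g'‖ := by
        refine mul_le_mul_of_nonneg_left ?_ (lipc pk L h j).coe_nonneg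
        have h1 : g (j+1) y - g' (j+1) y = (g (j+1) - g' (j+1)) y := by simp
        rw [h1]
        exact ((g (j+1) - g' (j+1)).norm_coe_le_norm y).trans
          (norm_le_pi_norm (g - g') (j+1))
    _ ≤ (epsdef pk) * ‖g - g'‖ :=
        mul_le_mul_of_nonneg_right (lipc_lt pk L h j).le (norm_nonneg _)

lemma sig_eps_le (n : ℝ) (hn : 0 ≤ n) : Sig pk * (epsdef pk * n) ≤ (1/2) * n := by
  have h1 : 0 ≤ Sig pk := Sig_nonneg pk
  have h2 : epsdef pk ≤ (2*(Sig pk + 1))⁻¹ := epsdef_le1 pk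
  have h3 : (0:ℝ) < 2*(Sig pk + 1) := by positivity
  have h4 : Sig pk * epsdef pk ≤ 1/2 := by
    calc Sig pk * epsdef pk ≤ Sig pk * (2*(Sig pk + 1))⁻¹ :=
          mul_le_mul_of_nonneg_left h2 h1
      _ ≤ (Sig pk + 1) * (2*(Sig pk + 1))⁻¹ := by
          refine mul_le_mul_of_nonneg_right (by linarith) (by positivity)
      _ = 1/2 := by field_simp
  calc Sig pk * (epsdef pk * n) = (Sig pk * epsdef pk) * n := by ring
    _ ≤ (1/2) * n := mul_le_mul_of_nonneg_right h4 hn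

lemma PhiL_half (g g') :
    ‖PhiL pk L h g - PhiL pk L h g'‖ ≤ (1/2) * ‖g - g'‖ := by
  have hnn : (0:ℝ) ≤ (1/2) * ‖g - g'‖ := by positivity
  refine (pi_norm_le_iff_of_nonneg hnn).mpr (fun j => ?_)
  have h1 : (PhiL pk L h g - PhiL pk L h g') j
      = grn pk (Tfamd pk (p := p)) (PsiL pk L h g - PsiL pk L h g') j := by
    rw [grn_sub]; rfl
  rw [h1]
  have h2 : ‖PsiL pk L h g - PsiL pk L h g'‖ ≤ epsdef pk * ‖g - g'‖ := by
    refine (pi_norm_le_iff_of_nonneg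
      (mul_nonneg (epsdef_pos pk).le (norm_nonneg _))).mpr (fun i => ?_)
    exact PsiL_diff_le pk L h g g' i
  calc ‖grn pk (Tfamd pk (p := p)) (PsiL pk L h g - PsiL pk L h g') j‖
      ≤ Sig pk * ‖PsiL pk L h g - PsiL pk L h g'‖ := norm_grn_le' pk _ _ j
    _ ≤ Sig pk * (epsdef pk * ‖g - g'‖) := by
        refine mul_le_mul_of_nonneg_left ?_ (Sig_nonneg pk)
        exact h2.trans (le_of_eq rfl)
    _ ≤ (1/2) * ‖g - g'‖ := sig_eps_le pk (‖g - g'‖) (norm_nonneg _)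

lemma contractPhiL : ContractingWith (1/2 : ℝ≥0) (PhiL pk L h) := by
  constructor
  · rw [← NNReal.coe_lt_coe]; norm_num
  · refine LipschitzWith.of_dist_le_mul (fun g g' => ?_)
    rw [dist_eq_norm, dist_eq_norm]
    have := PhiL_half pk L h g g'
    calc ‖PhiL pk L h g - PhiL pk L h g'‖ ≤ (1/2) * ‖g - g'‖ := this
      _ = ((1/2 : ℝ≥0) : ℝ) * ‖g - g'‖ := by norm_num

def gg : Fin (p+1) → (X →ᵇ X) :=
  ContractingWith.fixedPoint (PhiL pk L h) (contractPhiL pk L h)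

lemma gg_fix : PhiL pk L h (gg pk L h) = gg pk L h :=
  (contractPhiL pk L h).fixedPoint_isFixedPt

def Hmap (j : Fin (p+1)) : X → X := fun x => x + gg pk L h j x

def Kmap (j : Fin (p+1)) : X → X := fun y => y + kk pk L h j y

def HmapC (j : Fin (p+1)) : C(X, X) :=
  ⟨Hmap pk L h j, continuous_id.add (gg pk L h j).continuous⟩

def KmapC (j : Fin (p+1)) : C(X, X) :=
  ⟨Kmap pk L h j, continuous_id.add (kk pk L h j).continuous⟩

lemma gg_eval (j) (x : X) :
    gg pk L h j x = PsiL pk L h (gg pk L h) j x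
      + pk.Te (gg pk L h (j+1) (pk.Te.symm x)) := by
  have h1 : grn pk (Tfamd pk (p := p)) (PsiL pk L h (gg pk L h)) j
      = PsiL pk L h (gg pk L h) j
      + ((postB ((pk.Te : X →L[ℂ] X))).comp
          (preB ((Tfamd pk (p := p) j).symm.toContinuousMap)))
        (grn pk (Tfamd pk (p := p)) (PsiL pk L h (gg pk L h)) (j+1)) :=
    grn_identity pk (Tfamd pk (p := p)) (PsiL pk L h (gg pk L h)) j
  have h2 : grn pk (Tfamd pk (p := p)) (PsiL pk L h (gg pk L h)) = gg pk L h := gg_fix pk L h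
  rw [h2] at h1
  have h3 := DFunLike.congr_fun h1 x
  rw [BoundedContinuousFunction.add_apply] at h3
  exact h3

lemma kk_eval (j) (x : X) :
    kk pk L h j x = wkd pk L h j x + pk.Te (kk pk L h (j+1) ((Ghom pk L h j).symm x)) := by
  have h1 := grn_identity pk (Ghom pk L h) (wkd pk L h) j
  have h3 := DFunLike.congr_fun h1 x
  rw [BoundedContinuousFunction.add_apply] at h3
  exact h3

lemma RH (j : Fin (p+1)) (x : X) :
    Ghom pk L h j (Hmap pk L h (j+1) x) = Hmap pk L h j (pk.Te x) := by
  have h1 := gg_eval pk L h j (pk.Te x)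
  rw [PsiL_apply] at h1
  rw [pk.Te.symm_apply_apply] at h1
  show pk.Te (Hmap pk L h (j+1) x) + L j (Hmap pk L h (j+1) x)
      = pk.Te x + gg pk L h j (pk.Te x)
  show pk.Te (x + gg pk L h (j+1) x) + L j (x + gg pk L h (j+1) x)
      = pk.Te x + gg pk L h j (pk.Te x)
  rw [h1, map_add]
  abel

lemma RK (j : Fin (p+1)) (x : X) :
    pk.Te (Kmap pk L h (j+1) x) = Kmap pk L h j (Ghom pk L h j x) := by
  have h1 := kk_eval pk L h j (Ghom pk L h j x)
  rw [wkd_apply, (Ghom pk L h j).symm_apply_apply] at h1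
  show pk.Te (x + kk pk L h (j+1) x) = Ghom pk L h j x + kk pk L h j (Ghom pk L h j x)
  rw [h1, Ghom_apply, map_add]
  abel

lemma hR2H : ∀ (j : Fin (p+1)) (x : X),
    Ghom pk L h j ((HmapC pk L h (j+1)) x) = (HmapC pk L h j) ((Tfamd pk (p := p) j) x) :=
  fun j x => RH pk L h j x

lemma hR2K : ∀ (j : Fin (p+1)) (x : X),
    Tfamd pk (p := p) j ((KmapC pk L h (j+1)) x) = (KmapC pk L h j) ((Ghom pk L h j) x) :=
  fun j x => RK pk L h j x

lemma kH (j : Fin (p+1)) (x : X) :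
    kk pk L h j (Hmap pk L h j x) = -(gg pk L h j x) := by
  have hcomp := grn_comp pk (Ghom pk L h) (Tfamd pk (p := p)) (HmapC pk L h)
    (hR2H pk L h) (wkd pk L h) j
  have hw : (fun i => preB (HmapC pk L h i) (wkd pk L h i))
      = -(PsiL pk L h (gg pk L h)) := by
    funext i
    ext z
    rw [preB_apply, wkd_apply]
    have h1 : (Ghom pk L h i).symm ((HmapC pk L h i) z)
        = (HmapC pk L h (i+1)) ((Tfamd pk (p := p) i).symm z) :=
      hR1_of_hR2 (Ghom pk L h) (Tfamd pk (p := p)) (HmapC pk L h) (hR2H pk L h) i z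
    show -(L i ((Ghom pk L h i).symm ((HmapC pk L h i) z))) = _
    rw [h1]
    have h2 : (Tfamd pk (p := p) i).symm z = pk.Te.symm z := rfl
    rw [h2]
    show -(L i (pk.Te.symm z + gg pk L h (i+1) (pk.Te.symm z)))
        = (-(PsiL pk L h (gg pk L h))) i z
    simp [PsiL_apply]
  rw [hw] at hcomp
  have h3 : grn pk (Tfamd pk (p := p)) (-(PsiL pk L h (gg pk L h))) j
      = -(gg pk L h j) := by
    rw [grn_neg]
    have := gg_fix pk L h
    rw [show grn pk (Tfamd pk (p := p)) (PsiL pk L h (gg pk L h)) j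
      = gg pk L h j from congrFun this j]
  rw [h3] at hcomp
  have h4 := DFunLike.congr_fun hcomp x
  rw [preB_apply] at h4
  show (grn pk (Ghom pk L h) (wkd pk L h) j) ((HmapC pk L h j) x) = _
  rw [h4]
  simp

lemma KH (j : Fin (p+1)) (x : X) :
    Kmap pk L h j (Hmap pk L h j x) = x := by
  show Hmap pk L h j x + kk pk L h j (Hmap pk L h j x) = x
  rw [kH pk L h j x]
  show x + gg pk L h j x + -(gg pk L h j x) = x
  abel

def PsiP (cc : Fin (p+1) → (X →ᵇ X)) : Fin (p+1) → (X →ᵇ X) := fun j =>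
  BoundedContinuousFunction.ofNormedAddCommGroup
    (fun x => L j (Kmap pk L h (j+1) ((Ghom pk L h j).symm x)
      + cc (j+1) ((Ghom pk L h j).symm x)))
    ((Lcont pk L h j).comp
      ((((KmapC pk L h (j+1)).continuous).comp (Ghom pk L h j).symm.continuous).add
        ((cc (j+1)).continuous.comp (Ghom pk L h j).symm.continuous)))
    (bndc pk L h j)
    (fun x => bndc_le pk L h j _)

lemma PsiP_apply (cc) (j) (x : X) :
    PsiP pk L h cc j x = L j (Kmap pk L h (j+1) ((Ghom pk L h j).symm x)
      + cc (j+1) ((Ghom pk L h j).symm x)) := rfl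

def PhiP (cc : Fin (p+1) → (X →ᵇ X)) : Fin (p+1) → (X →ᵇ X) :=
  grn pk (Ghom pk L h) (PsiP pk L h cc)

lemma PsiP_diff_le (cc cc') (j) :
    ‖PsiP pk L h cc j - PsiP pk L h cc' j‖ ≤ (epsdef pk) * ‖cc - cc'‖ := by
  have hnn : (0:ℝ) ≤ epsdef pk * ‖cc - cc'‖ :=
    mul_nonneg (epsdef_pos pk).le (norm_nonneg _)
  refine (BoundedContinuousFunction.norm_le hnn).mpr (fun x => ?_)
  rw [BoundedContinuousFunction.sub_apply, PsiP_apply, PsiP_apply]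
  set y := (Ghom pk L h j).symm x
  set a := Kmap pk L h (j+1) y
  calc ‖L j (a + cc (j+1) y) - L j (a + cc' (j+1) y)‖
      ≤ (lipc pk L h j : ℝ) * ‖(a + cc (j+1) y) - (a + cc' (j+1) y)‖ :=
        Ldiff_le pk L h j _ _
    _ = (lipc pk L h j : ℝ) * ‖cc (j+1) y - cc' (j+1) y‖ := by rw [add_sub_add_left_eq_sub]
    _ ≤ (lipc pk L h j : ℝ) * ‖cc - cc'‖ := by
        refine mul_le_mul_of_nonneg_left ?_ (lipc pk L h j).coe_nonneg
        have h1 : cc (j+1) y - cc' (j+1) y = (cc (j+1) - cc' (j+1)) y := by simp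
        rw [h1]
        exact ((cc (j+1) - cc' (j+1)).norm_coe_le_norm y).trans
          (norm_le_pi_norm (cc - cc') (j+1))
    _ ≤ (epsdef pk) * ‖cc - cc'‖ :=
        mul_le_mul_of_nonneg_right (lipc_lt pk L h j).le (norm_nonneg _)

lemma PhiP_half (cc cc') :
    ‖PhiP pk L h cc - PhiP pk L h cc'‖ ≤ (1/2) * ‖cc - cc'‖ := by
  have hnn : (0:ℝ) ≤ (1/2) * ‖cc - cc'‖ := by positivity
  refine (pi_norm_le_iff_of_nonneg hnn).mpr (fun j => ?_)
  have h1 : (PhiP pk L h cc - PhiP pk L h cc') j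
      = grn pk (Ghom pk L h) (PsiP pk L h cc - PsiP pk L h cc') j := by
    rw [grn_sub]; rfl
  rw [h1]
  have h2 : ‖PsiP pk L h cc - PsiP pk L h cc'‖ ≤ epsdef pk * ‖cc - cc'‖ := by
    refine (pi_norm_le_iff_of_nonneg
      (mul_nonneg (epsdef_pos pk).le (norm_nonneg _))).mpr (fun i => ?_)
    exact PsiP_diff_le pk L h cc cc' i
  calc ‖grn pk (Ghom pk L h) (PsiP pk L h cc - PsiP pk L h cc') j‖
      ≤ Sig pk * ‖PsiP pk L h cc - PsiP pk L h cc'‖ := norm_grn_le' pk _ _ j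
    _ ≤ Sig pk * (epsdef pk * ‖cc - cc'‖) :=
        mul_le_mul_of_nonneg_left h2 (Sig_nonneg pk)
    _ ≤ (1/2) * ‖cc - cc'‖ := sig_eps_le pk _ (norm_nonneg _)

lemma contractPhiP : ContractingWith (1/2 : ℝ≥0) (PhiP pk L h) := by
  constructor
  · rw [← NNReal.coe_lt_coe]; norm_num
  · refine LipschitzWith.of_dist_le_mul (fun cc cc' => ?_)
    rw [dist_eq_norm, dist_eq_norm]
    calc ‖PhiP pk L h cc - PhiP pk L h cc'‖ ≤ (1/2) * ‖cc - cc'‖ := PhiP_half pk L h cc cc'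
      _ = ((1/2 : ℝ≥0) : ℝ) * ‖cc - cc'‖ := by norm_num

lemma Te_symm_Kmap (j : Fin (p+1)) (x : X) :
    pk.Te.symm (Kmap pk L h j x) = Kmap pk L h (j+1) ((Ghom pk L h j).symm x) := by
  have h1 := RK pk L h j ((Ghom pk L h j).symm x)
  rw [(Ghom pk L h j).apply_symm_apply] at h1
  rw [← h1, pk.Te.symm_apply_apply]

lemma fixP1 : PhiP pk L h (fun i => preB (KmapC pk L h i) (gg pk L h i))
    = (fun i => preB (KmapC pk L h i) (gg pk L h i)) := by
  have hgg : ∀ j, gg pk L h j = grn pk (Tfamd pk (p := p)) (PsiL pk L h (gg pk L h)) j :=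
    fun j => (congrFun (gg_fix pk L h) j).symm
  funext j
  have hcomp := grn_comp pk (Tfamd pk (p := p)) (Ghom pk L h) (KmapC pk L h)
    (hR2K pk L h) (PsiL pk L h (gg pk L h)) j
  have hw : (fun i => preB (KmapC pk L h i) (PsiL pk L h (gg pk L h) i))
      = PsiP pk L h (fun i => preB (KmapC pk L h i) (gg pk L h i)) := by
    funext i
    ext z
    rw [preB_apply, PsiP_apply, preB_apply]
    show L i (pk.Te.symm ((KmapC pk L h i) z)
        + gg pk L h (i+1) (pk.Te.symm ((KmapC pk L h i) z))) = _
    have h1 : pk.Te.symm ((KmapC pk L h i) z)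
        = Kmap pk L h (i+1) ((Ghom pk L h i).symm z) := Te_symm_Kmap pk L h i z
    rw [h1]
    rfl
  rw [hw] at hcomp
  show PhiP pk L h _ j = _
  unfold PhiP
  rw [← hcomp, ← hgg j]

lemma fixP2 : PhiP pk L h (-(kk pk L h)) = -(kk pk L h) := by
  funext j
  have hw : PsiP pk L h (-(kk pk L h)) = -(wkd pk L h) := by
    funext i
    ext z
    rw [PsiP_apply]
    set y := (Ghom pk L h i).symm z
    have h1 : (-(kk pk L h)) (i+1) y = -(kk pk L h (i+1) y) := rfl
    rw [h1]
    have h2 : Kmap pk L h (i+1) y + -(kk pk L h (i+1) y) = y := by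
      show y + kk pk L h (i+1) y + -(kk pk L h (i+1) y) = y
      abel
    rw [h2]
    show L i y = (-(wkd pk L h)) i z
    have h3 : (-(wkd pk L h)) i z = -(wkd pk L h i z) := rfl
    rw [h3, wkd_apply]
    simp
    rfl
  show grn pk (Ghom pk L h) (PsiP pk L h (-(kk pk L h))) j = _
  rw [hw, grn_neg]
  rfl

lemma ggK_eq : (fun i => preB (KmapC pk L h i) (gg pk L h i)) = -(kk pk L h) :=
  (contractPhiP pk L h).fixedPoint_unique' (fixP1 pk L h) (fixP2 pk L h)

lemma HK (j : Fin (p+1)) (x : X) :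
    Hmap pk L h j (Kmap pk L h j x) = x := by
  have h1 := DFunLike.congr_fun (congrFun (ggK_eq pk L h) j) x
  rw [preB_apply] at h1
  show Kmap pk L h j x + gg pk L h j (Kmap pk L h j x) = x
  have h2 : gg pk L h j ((KmapC pk L h j) x) = -(kk pk L h j x) := by
    rw [h1]; rfl
  show Kmap pk L h j x + gg pk L h j ((KmapC pk L h j) x) = x
  rw [h2]
  show x + kk pk L h j x + -(kk pk L h j x) = x
  abel

def HomeoH : X ≃ₜ X where
  toFun := Hmap pk L h 0
  invFun := Kmap pk L h 0
  left_inv := KH pk L h 0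
  right_inv := HK pk L h 0
  continuous_toFun := (HmapC pk L h 0).continuous
  continuous_invFun := (KmapC pk L h 0).continuous

lemma conj (x : X) :
    CompFamily (p+1) (fun j y => pk.Te y + L j y) x
      = HomeoH pk L h ((⇑pk.Te)^[p+1] ((HomeoH pk L h).symm x)) := by
  have hyp : ∀ (i : Fin (p+1)) (z : X),
      (fun (j : Fin (p+1)) (y : X) => pk.Te y + L j y) i
        ((fun i : Fin (p+2) => Hmap pk L h ((i : ℕ) : Fin (p+1))) i.succ z)
      = (fun i : Fin (p+2) => Hmap pk L h ((i : ℕ) : Fin (p+1))) i.castSucc (pk.Te z) := by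
    intro i z
    show pk.Te (Hmap pk L h (((i.succ : Fin (p+2)) : ℕ) : Fin (p+1)) z)
        + L i (Hmap pk L h (((i.succ : Fin (p+2)) : ℕ) : Fin (p+1)) z)
      = Hmap pk L h (((i.castSucc : Fin (p+2)) : ℕ) : Fin (p+1)) (pk.Te z)
    rw [Fin.val_succ, Fin.coe_castSucc, Nat.cast_add, Nat.cast_one, Fin.cast_val_eq_self]
    rw [← Ghom_apply pk L h i]
    exact RH pk L h i z
  have key := comp_conj (⇑pk.Te) (p+1) (fun j y => pk.Te y + L j y)
    (fun i : Fin (p+2) => Hmap pk L h ((i : ℕ) : Fin (p+1))) hyp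
    (Kmap pk L h 0 x)
  have h1 : ((Fin.last (p+1) : Fin (p+2)) : ℕ) = p+1 := rfl
  have h2 : (((p+1 : ℕ)) : Fin (p+1)) = 0 := by
    exact_mod_cast CharP.cast_eq_zero (Fin (p+1)) (p+1)
  have h3 : (((0 : Fin (p+2)) : ℕ) : Fin (p+1)) = 0 := by norm_num
  rw [h1, h2, h3] at key
  have h4 : Hmap pk L h 0 (Kmap pk L h 0 x) = x := HK pk L h 0 x
  rw [h4] at key
  show CompFamily (p+1) (fun j y => pk.Te y + L j y) x
      = Hmap pk L h 0 ((⇑pk.Te)^[p+1] (Kmap pk L h 0 x))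
  rw [← key]

lemma Hbound : ∃ Cb : ℝ, ∀ x : X, ‖HomeoH pk L h x - x‖ ≤ Cb := by
  refine ⟨‖gg pk L h 0‖, fun x => ?_⟩
  show ‖Hmap pk L h 0 x - x‖ ≤ _
  have h1 : Hmap pk L h 0 x - x = gg pk L h 0 x := by
    show x + gg pk L h 0 x - x = gg pk L h 0 x
    abel
  rw [h1]
  exact (gg pk L h 0).norm_coe_le_norm x

def Cdef (pk : GreenPack X) : ℝ := 2*(Sig pk + 1)

lemma Cdef_pos (pk : GreenPack X) : 0 < Cdef pk := by
  have := Sig_nonneg pk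
  unfold Cdef
  positivity

lemma lipdep (L' : Fin (p+1) → X → X) (h' : Adm pk L') (x : X) :
    ‖HomeoH pk L h x - HomeoH pk L' h' x‖
      ≤ Cdef pk * ⨆ j, ⨆ y, ‖L j y - L' j y‖ := by
  set D := ⨆ j : Fin (p+1), ⨆ y : X, ‖L j y - L' j y‖ with hD
  have hbdd_in : ∀ j, BddAbove (Set.range (fun y : X => ‖L j y - L' j y‖)) := by
    intro j
    refine ⟨bndc pk L h j + bndc pk L' h' j, ?_⟩
    rintro _ ⟨y, rfl⟩
    exact (norm_sub_le _ _).trans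
      (add_le_add (bndc_le pk L h j y) (bndc_le pk L' h' j y))
  have hbdd_out : BddAbove (Set.range (fun j : Fin (p+1) => ⨆ y : X, ‖L j y - L' j y‖)) :=
    Set.Finite.bddAbove (Set.finite_range _)
  have hDle : ∀ (j : Fin (p+1)) (y : X), ‖L j y - L' j y‖ ≤ D := fun j y =>
    (le_ciSup (hbdd_in j) y).trans (le_ciSup hbdd_out j)
  have hD0 : (0:ℝ) ≤ D := le_trans (norm_nonneg _) (hDle 0 0)
  set g := gg pk L h with hg
  set g' := gg pk L' h' with hg'
  have hstep : ∀ j, ‖PsiL pk L h g' j - PsiL pk L' h' g' j‖ ≤ D := by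
    intro j
    refine (BoundedContinuousFunction.norm_le hD0).mpr (fun z => ?_)
    rw [BoundedContinuousFunction.sub_apply, PsiL_apply, PsiL_apply]
    exact hDle j _
  have hdiff : ‖PhiL pk L h g' - PhiL pk L' h' g'‖ ≤ Sig pk * D := by
    refine (pi_norm_le_iff_of_nonneg (mul_nonneg (Sig_nonneg pk) hD0)).mpr (fun j => ?_)
    have h1 : (PhiL pk L h g' - PhiL pk L' h' g') j
        = grn pk (Tfamd pk (p := p)) (PsiL pk L h g' - PsiL pk L' h' g') j := by
      rw [grn_sub]; rfl
    rw [h1]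
    refine (norm_grn_le' pk _ _ j).trans ?_
    refine mul_le_mul_of_nonneg_left ?_ (Sig_nonneg pk)
    exact (pi_norm_le_iff_of_nonneg hD0).mpr hstep
  have hhalf := PhiL_half pk L h g g'
  have htri : ‖g - g'‖ ≤ ‖PhiL pk L h g - PhiL pk L h g'‖
      + ‖PhiL pk L h g' - PhiL pk L' h' g'‖ := by
    have e1 : PhiL pk L h g = g := gg_fix pk L h
    have e2 : PhiL pk L' h' g' = g' := gg_fix pk L' h'
    calc ‖g - g'‖ = ‖(PhiL pk L h g - PhiL pk L h g')
          + (PhiL pk L h g' - PhiL pk L' h' g')‖ := by rw [e1, e2]; congr 1; abel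
      _ ≤ _ := norm_add_le _ _
  have hgg' : ‖g - g'‖ ≤ 2 * (Sig pk * D) := by linarith
  have hfinal : ‖HomeoH pk L h x - HomeoH pk L' h' x‖ ≤ ‖g - g'‖ := by
    show ‖Hmap pk L h 0 x - Hmap pk L' h' 0 x‖ ≤ _
    have h1 : Hmap pk L h 0 x - Hmap pk L' h' 0 x = (g 0 - g' 0) x := by
      show (x + g 0 x) - (x + g' 0 x) = (g 0 - g' 0) x
      rw [BoundedContinuousFunction.sub_apply]
      abel
    rw [h1]
    exact ((g 0 - g' 0).norm_coe_le_norm x).trans (norm_le_pi_norm (g - g') 0)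
  refine hfinal.trans (hgg'.trans ?_)
  unfold Cdef
  have := Sig_nonneg pk
  nlinarith

end Build

theorem per_p (pk : GreenPack X) (p : ℕ) :
    ∃ H : (Fin (p + 1) → X → X) → (X ≃ₜ X),
      (∀ L : Fin (p + 1) → X → X,
        (∀ j, BoundedMap (L j)) → (∀ j, LipLt (L j) (epsdef pk)) →
        (∀ x : X, CompFamily (p + 1) (fun j y => pk.Te y + L j y) x =
            (H L) ((⇑pk.Te)^[p + 1] ((H L).symm x))) ∧
        BoundedMap (fun x : X => H L x - x)) ∧
      (∀ L L' : Fin (p + 1) → X → X,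
        (∀ j, BoundedMap (L j)) → (∀ j, LipLt (L j) (epsdef pk)) →
        (∀ j, BoundedMap (L' j)) → (∀ j, LipLt (L' j) (epsdef pk)) →
        ∀ x : X, ‖H L x - H L' x‖ ≤ Cdef pk * ⨆ j, ⨆ y, ‖L j y - L' j y‖) := by
  classical
  refine ⟨fun L => if h : Adm pk L then HomeoH pk L h else Homeomorph.refl X, ?_, ?_⟩
  · intro L hb hl
    have h : Adm pk L := ⟨hb, hl⟩
    simp only [dif_pos h]
    exact ⟨conj pk L h, Hbound pk L h⟩
  · intro L L' hb hl hb' hl' x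
    have h : Adm pk L := ⟨hb, hl⟩
    have h' : Adm pk L' := ⟨hb', hl'⟩
    simp only [dif_pos h, dif_pos h']
    exact lipdep pk L h L' h' x

end GH

theorem genHyperbolic_conjugacy_lipschitz_dependence
    {X : Type*} [NormedAddCommGroup X] [NormedSpace ℂ X] [CompleteSpace X]
    (T : X ≃L[ℂ] X) (hT : IsGenHyperbolic T) :
    ∃ ε > 0, ∃ C > (0 : ℝ), ∀ p : ℕ,
      ∃ H : (Fin (p + 1) → X → X) → (X ≃ₜ X),
        (∀ L : Fin (p + 1) → X → X,
          (∀ j, BoundedMap (L j)) → (∀ j, LipLt (L j) ε) →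
          (∀ x : X, CompFamily (p + 1) (fun j y => T y + L j y) x =
              (H L) ((⇑T)^[p + 1] ((H L).symm x))) ∧
          BoundedMap (fun x : X => H L x - x)) ∧
        (∀ L L' : Fin (p + 1) → X → X,
          (∀ j, BoundedMap (L j)) → (∀ j, LipLt (L j) ε) →
          (∀ j, BoundedMap (L' j)) → (∀ j, LipLt (L' j) ε) →
          ∀ x : X, ‖H L x - H L' x‖ ≤ C * ⨆ j, ⨆ y, ‖L j y - L' j y‖) := by
  obtain ⟨pk, hpk⟩ := exists_greenPack T hT
  subst hpk
  exact ⟨GH.epsdef pk, GH.epsdef_pos pk, GH.Cdef pk, GH.Cdef_pos pk,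
    fun p => GH.per_p pk p⟩
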